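/- Let n ≥ 1 and f ∈ L¹(ℝⁿ). Then for every t ∈ ℝⁿ, lim_{R → ∞} B_R^{R²/2}[f](t) = ∫_{ℝⁿ} e^{2πi⟨t,ξ⟩} e^{-‖ξ‖²/2} f̂(ξ) dξ, and this limit equals (f * G)(t), where G(x) = (2π)^{n/2} e^{-2π²‖x‖²}. -/

import Mathlib

open MeasureTheory Real Complex Filter
open scoped ENNReal RealInnerProductSpace FourierTransform

/-- Fourier transform `f̂(ξ) = ∫ e^{-2πi⟨x,ξ⟩} f(x) dx` on `ℝⁿ`. -/
noncomputable def fourierT (n : ℕ) (f : EuclideanSpace ℝ (Fin n) → ℂ)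
    (ξ : EuclideanSpace ℝ (Fin n)) : ℂ :=
  ∫ x, Complex.exp (-(2 * Real.pi * ⟪x, ξ⟫ : ℝ) * Complex.I) * f x

/-- Bochner–Riesz kernel `K_{R,α}(z) = ∫ e^{2πi⟨z,ξ⟩} (1-|ξ|²/R²)₊^α dξ`. -/
noncomputable def BRkernel (n : ℕ) (R α : ℝ) (z : EuclideanSpace ℝ (Fin n)) : ℂ :=
  ∫ ξ : EuclideanSpace ℝ (Fin n),
    Complex.exp ((2 * Real.pi * ⟪z, ξ⟫ : ℝ) * Complex.I) *
      (((max (1 - ‖ξ‖ ^ 2 / R ^ 2) 0) ^ α : ℝ) : ℂ)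

/-- Bochner–Riesz operator `B_R^α[f](t) = ∫ e^{2πi⟨t,ξ⟩} (1-|ξ|²/R²)₊^α f̂(ξ) dξ`. -/
noncomputable def BR (n : ℕ) (R α : ℝ) (f : EuclideanSpace ℝ (Fin n) → ℂ)
    (t : EuclideanSpace ℝ (Fin n)) : ℂ :=
  ∫ ξ : EuclideanSpace ℝ (Fin n),
    Complex.exp ((2 * Real.pi * ⟪t, ξ⟫ : ℝ) * Complex.I) *
      (((max (1 - ‖ξ‖ ^ 2 / R ^ 2) 0) ^ α : ℝ) : ℂ) * fourierT n f ξ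

lemma fourierT_eq (n : ℕ) (f : EuclideanSpace ℝ (Fin n) → ℂ) :
    fourierT n f = 𝓕 f := by
  funext ξ
  rw [Real.fourier_eq']
  unfold fourierT
  congr 1
  funext x
  rw [smul_eq_mul]
  congr 2
  push_cast
  ring

lemma fourierT_continuous (n : ℕ) {f : EuclideanSpace ℝ (Fin n) → ℂ}
    (hf : Integrable f) : Continuous (fourierT n f) := by
  rw [fourierT_eq]
  exact VectorFourier.fourierIntegral_continuous Real.continuous_fourierChar
    (by exact continuous_inner) hf

lemma fourierT_norm_le (n : ℕ) (f : EuclideanSpace ℝ (Fin n) → ℂ)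
    (ξ : EuclideanSpace ℝ (Fin n)) : ‖fourierT n f ξ‖ ≤ ∫ x, ‖f x‖ := by
  rw [fourierT_eq]
  exact VectorFourier.norm_fourierIntegral_le_integral_norm _ _ _ _ _

lemma gaussian_integrable (n : ℕ) :
    Integrable (fun ξ : EuclideanSpace ℝ (Fin n) => Real.exp (-‖ξ‖ ^ 2 / 2)) := by
  have h := (GaussianFourier.integrable_cexp_neg_mul_sq_norm_add (b := (1/2 : ℂ)) (by norm_num) 0
    (0 : EuclideanSpace ℝ (Fin n))).norm
  refine h.congr ?_
  filter_upwards with ξ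
  rw [Complex.norm_exp]
  congr 1
  simp [Complex.add_re, Complex.mul_re]
  rw [← Complex.ofReal_pow, Complex.ofReal_re]
  ring

lemma gaussian_inner_integral (n : ℕ) (y : EuclideanSpace ℝ (Fin n)) :
    (∫ ξ : EuclideanSpace ℝ (Fin n),
      Complex.exp ((2 * Real.pi * ⟪y, ξ⟫ : ℝ) * Complex.I) * ((Real.exp (-‖ξ‖ ^ 2 / 2) : ℝ) : ℂ))
    = (((2 * Real.pi) ^ ((n : ℝ) / 2) * Real.exp (-2 * Real.pi ^ 2 * ‖y‖ ^ 2) : ℝ) : ℂ) := by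
  have key : ∀ ξ : EuclideanSpace ℝ (Fin n),
      Complex.exp ((2 * Real.pi * ⟪y, ξ⟫ : ℝ) * Complex.I) * ((Real.exp (-‖ξ‖ ^ 2 / 2) : ℝ) : ℂ)
        = Complex.exp (-(1/2 : ℂ) * (‖ξ‖ : ℂ) ^ 2 + (2 * (Real.pi : ℂ) * Complex.I) * ((⟪y, ξ⟫ : ℝ) : ℂ)) := by
    intro ξ
    rw [Complex.ofReal_exp, ← Complex.exp_add]
    push_cast
    ring_nf
  simp_rw [key]
  rw [GaussianFourier.integral_cexp_neg_mul_sq_norm_add (by norm_num) (2 * (Real.pi : ℂ) * Complex.I) y]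
  have hrank : (Module.finrank ℝ (EuclideanSpace ℝ (Fin n)) : ℂ) = (n : ℂ) := by
    rw [finrank_euclideanSpace_fin]
  rw [hrank, Complex.ofReal_mul, Complex.ofReal_exp]
  congr 1
  · rw [Complex.ofReal_cpow (by positivity)]
    push_cast
    congr 1
    ring
  · congr 1
    have h2 : (2 * (Real.pi : ℂ) * Complex.I) ^ 2 = -(4 * (Real.pi : ℂ) ^ 2) := by
      rw [mul_pow, mul_pow, Complex.I_sq]; ring
    rw [h2]
    push_cast
    ring

lemma weight_le {R : ℝ} (hR : 1 ≤ R) (a : ℝ) (ha : 0 ≤ a) :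
    (max (1 - a / R ^ 2) 0) ^ (R ^ 2 / 2) ≤ Real.exp (-a / 2) := by
  have hR0 : (0:ℝ) < R := lt_of_lt_of_le one_pos hR
  have h1 : max (1 - a / R ^ 2) 0 ≤ Real.exp (-(a / R ^ 2)) := by
    apply max_le _ (Real.exp_pos _).le
    linarith [Real.add_one_le_exp (-(a / R ^ 2))]
  calc (max (1 - a / R ^ 2) 0) ^ (R ^ 2 / 2)
      ≤ (Real.exp (-(a / R ^ 2))) ^ (R ^ 2 / 2) :=
        Real.rpow_le_rpow (le_max_right _ _) h1 (by positivity)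
    _ = Real.exp (-a / 2) := by
        rw [← Real.exp_mul]
        congr 1
        field_simp

lemma weight_tendsto (a : ℝ) (ha : 0 ≤ a) :
    Tendsto (fun R : ℝ => (max (1 - a / R ^ 2) 0) ^ (R ^ 2 / 2)) atTop
      (nhds (Real.exp (-a / 2))) := by
  have h1 : Tendsto (fun R : ℝ => R ^ 2 / 2) atTop atTop :=
    (tendsto_pow_atTop two_ne_zero).atTop_div_const (by norm_num)
  have h2 := (tendsto_one_add_div_rpow_exp (-a / 2)).comp h1
  refine h2.congr' ?_
  filter_upwards [eventually_ge_atTop (max 1 (Real.sqrt a))] with R hR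
  have hR1 : (1:ℝ) ≤ R := le_trans (le_max_left _ _) hR
  have hR0 : (0:ℝ) < R := lt_of_lt_of_le one_pos hR1
  have ha' : a ≤ R ^ 2 := by
    have h := le_trans (le_max_right _ _) hR
    nlinarith [Real.sq_sqrt ha, Real.sqrt_nonneg a]
  have hbase : 1 + (-a / 2) / (R ^ 2 / 2) = 1 - a / R ^ 2 := by
    field_simp
    ring
  have hmax : max (1 - a / R ^ 2) 0 = 1 - a / R ^ 2 := by
    rw [max_eq_left]
    rw [sub_nonneg]
    exact div_le_one_of_le₀ ha' (by positivity)
  simp only [Function.comp_apply]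
  rw [hbase, hmax]

/-- pointwise limit of `B_R^{R²/2}[f]` as `R → ∞` is the Gaussian
regularization `∫ e^{2πi⟨t,ξ⟩} e^{-‖ξ‖²/2} f̂(ξ) dξ = (f * G)(t)` with
`G(x) = (2π)^{n/2} e^{-2π²‖x‖²}`. -/
theorem bochnerRiesz_gaussian_limit (n : ℕ) (hn : 1 ≤ n)
    (f : EuclideanSpace ℝ (Fin n) → ℂ) (hf : Integrable f)
    (t : EuclideanSpace ℝ (Fin n)) :
    Tendsto (fun R : ℝ => BR n R (R ^ 2 / 2) f t) atTop
        (nhds (∫ ξ : EuclideanSpace ℝ (Fin n),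
          Complex.exp ((2 * Real.pi * ⟪t, ξ⟫ : ℝ) * Complex.I) *
            Real.exp (-‖ξ‖ ^ 2 / 2) * fourierT n f ξ)) ∧
      (∫ ξ : EuclideanSpace ℝ (Fin n),
          Complex.exp ((2 * Real.pi * ⟪t, ξ⟫ : ℝ) * Complex.I) *
            Real.exp (-‖ξ‖ ^ 2 / 2) * fourierT n f ξ) =
        ∫ s, f (t - s) *
          (((2 * Real.pi) ^ ((n : ℝ) / 2) *
            Real.exp (-2 * Real.pi ^ 2 * ‖s‖ ^ 2) : ℝ) : ℂ) := by
  constructor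
  · unfold BR
    apply MeasureTheory.tendsto_integral_filter_of_dominated_convergence
      (bound := fun ξ : EuclideanSpace ℝ (Fin n) =>
        Real.exp (-‖ξ‖ ^ 2 / 2) * ∫ x, ‖f x‖)
    · -- measurability
      filter_upwards [eventually_ge_atTop (1:ℝ)] with R hR
      have hrpow : Continuous fun y : ℝ => y ^ (R ^ 2 / 2) := by
        apply continuous_iff_continuousAt.2
        intro y
        exact Real.continuousAt_rpow_const y _ (Or.inr (by positivity))
      have hc1 : Continuous fun ξ : EuclideanSpace ℝ (Fin n) =>
          Complex.exp ((2 * Real.pi * ⟪t, ξ⟫ : ℝ) * Complex.I) := by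
        apply Complex.continuous_exp.comp
        exact (Complex.continuous_ofReal.comp
          (continuous_const.mul (continuous_const.inner continuous_id))).mul continuous_const
      have hc2 : Continuous fun ξ : EuclideanSpace ℝ (Fin n) =>
          (((max (1 - ‖ξ‖ ^ 2 / R ^ 2) 0) ^ (R ^ 2 / 2) : ℝ) : ℂ) := by
        apply Complex.continuous_ofReal.comp
        exact hrpow.comp
          ((continuous_const.sub ((continuous_norm.pow 2).div_const _)).max continuous_const)
      exact (((hc1.mul hc2).mul (fourierT_continuous n hf))).aestronglyMeasurable
    · -- bound
      filter_upwards [eventually_ge_atTop (1:ℝ)] with R hR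
      filter_upwards with ξ
      rw [norm_mul, norm_mul, Complex.norm_exp_ofReal_mul_I, one_mul, Complex.norm_real,
        Real.norm_of_nonneg (Real.rpow_nonneg (le_max_right _ _) _)]
      apply mul_le_mul (weight_le hR _ (by positivity)) (fourierT_norm_le n f ξ)
        (norm_nonneg _) (Real.exp_pos _).le
    · -- integrability of bound
      exact (gaussian_integrable n).mul_const _
    · -- pointwise limit
      filter_upwards with ξ
      have hw := weight_tendsto (‖ξ‖ ^ 2) (by positivity)
      have hwc : Tendsto (fun R : ℝ =>
          (((max (1 - ‖ξ‖ ^ 2 / R ^ 2) 0) ^ (R ^ 2 / 2) : ℝ) : ℂ)) atTop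
          (nhds ((Real.exp (-‖ξ‖ ^ 2 / 2) : ℝ) : ℂ)) :=
        (Complex.continuous_ofReal.tendsto _).comp hw
      exact (tendsto_const_nhds.mul hwc).mul tendsto_const_nhds
  · -- identification of the limit as convolution
    have step0 : ∀ (ξ x : EuclideanSpace ℝ (Fin n)),
        Complex.exp ((2 * Real.pi * ⟪t, ξ⟫ : ℝ) * Complex.I) *
          Complex.exp (-(2 * Real.pi * ⟪x, ξ⟫ : ℝ) * Complex.I)
          = Complex.exp ((2 * Real.pi * ⟪t - x, ξ⟫ : ℝ) * Complex.I) := by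
      intro ξ x
      rw [← Complex.exp_add]
      congr 1
      rw [inner_sub_left]
      push_cast
      ring
    have step1 : (∫ ξ : EuclideanSpace ℝ (Fin n),
        Complex.exp ((2 * Real.pi * ⟪t, ξ⟫ : ℝ) * Complex.I) *
          Real.exp (-‖ξ‖ ^ 2 / 2) * fourierT n f ξ)
        = ∫ ξ : EuclideanSpace ℝ (Fin n), ∫ x, f x *
            (Complex.exp ((2 * Real.pi * ⟪t - x, ξ⟫ : ℝ) * Complex.I) *
              ((Real.exp (-‖ξ‖ ^ 2 / 2) : ℝ) : ℂ)) := by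
      congr 1
      funext ξ
      unfold fourierT
      rw [← MeasureTheory.integral_const_mul]
      congr 1
      funext x
      rw [← step0 ξ x]
      ring
    have hint : Integrable (Function.uncurry fun (ξ x : EuclideanSpace ℝ (Fin n)) => f x *
        (Complex.exp ((2 * Real.pi * ⟪t - x, ξ⟫ : ℝ) * Complex.I) *
          ((Real.exp (-‖ξ‖ ^ 2 / 2) : ℝ) : ℂ))) (volume.prod volume) := by
      have hc : Continuous fun p : EuclideanSpace ℝ (Fin n) × EuclideanSpace ℝ (Fin n) =>
          Complex.exp ((2 * Real.pi * ⟪t - p.2, p.1⟫ : ℝ) * Complex.I) *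
            ((Real.exp (-‖p.1‖ ^ 2 / 2) : ℝ) : ℂ) := by
        apply Continuous.mul
        · apply Complex.continuous_exp.comp
          exact (Complex.continuous_ofReal.comp
            (continuous_const.mul ((continuous_const.sub continuous_snd).inner
              continuous_fst))).mul continuous_const
        · exact Complex.continuous_ofReal.comp (Real.continuous_exp.comp
            (((continuous_norm.comp continuous_fst).pow 2).neg.div_const 2))
      have hmeas : AEStronglyMeasurable (Function.uncurry fun (ξ x : EuclideanSpace ℝ (Fin n)) =>
          f x * (Complex.exp ((2 * Real.pi * ⟪t - x, ξ⟫ : ℝ) * Complex.I) *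
            ((Real.exp (-‖ξ‖ ^ 2 / 2) : ℝ) : ℂ))) (volume.prod volume) :=
        hf.1.comp_snd.mul hc.aestronglyMeasurable
      refine Integrable.mono' ((gaussian_integrable n).mul_prod hf.norm) hmeas ?_
      filter_upwards with p
      rw [Function.uncurry]
      rw [norm_mul, norm_mul, Complex.norm_exp_ofReal_mul_I, one_mul, Complex.norm_real,
        Real.norm_of_nonneg (Real.exp_pos _).le]
      exact le_of_eq (mul_comm _ _)
    have step2 : (∫ ξ : EuclideanSpace ℝ (Fin n), ∫ x, f x *
            (Complex.exp ((2 * Real.pi * ⟪t - x, ξ⟫ : ℝ) * Complex.I) *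
              ((Real.exp (-‖ξ‖ ^ 2 / 2) : ℝ) : ℂ)))
        = ∫ x : EuclideanSpace ℝ (Fin n), f x *
            (((2 * Real.pi) ^ ((n : ℝ) / 2) *
              Real.exp (-2 * Real.pi ^ 2 * ‖t - x‖ ^ 2) : ℝ) : ℂ) := by
      rw [MeasureTheory.integral_integral_swap hint]
      congr 1
      funext x
      rw [MeasureTheory.integral_const_mul, gaussian_inner_integral n (t - x)]
    have step3 : (∫ s : EuclideanSpace ℝ (Fin n), f (t - s) *
          (((2 * Real.pi) ^ ((n : ℝ) / 2) *
            Real.exp (-2 * Real.pi ^ 2 * ‖s‖ ^ 2) : ℝ) : ℂ))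
        = ∫ x : EuclideanSpace ℝ (Fin n), f x *
            (((2 * Real.pi) ^ ((n : ℝ) / 2) *
              Real.exp (-2 * Real.pi ^ 2 * ‖t - x‖ ^ 2) : ℝ) : ℂ) := by
      rw [← MeasureTheory.integral_sub_left_eq_self (fun s => f (t - s) *
          (((2 * Real.pi) ^ ((n : ℝ) / 2) *
            Real.exp (-2 * Real.pi ^ 2 * ‖s‖ ^ 2) : ℝ) : ℂ)) volume t]
      congr 1
      funext x
      simp [sub_sub_cancel]
    rw [step1, step2, step3]
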